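/- For every positive integer d, the deformed Eulerian polynomial F_d satisfies the partial differential equation ∂F_d/∂y (x,1) = (d x / 2) · ∂F_d/∂x (x,1). -/

import Mathlib

open MvPolynomial
noncomputable section
abbrev R2 := MvPolynomial (Fin 2) ℝ
def Sh : R2 →ₐ[ℝ] R2 := aeval (fun i : Fin 2 => if i = 0 then X 0 * X 1 else X 1)
def Th : R2 →ₐ[ℝ] R2 := aeval (fun i : Fin 2 => if i = 0 then X 0 else 1)

lemma h01 : (0 : Fin 2) ≠ 1 := by decide
lemma h10 : (1 : Fin 2) ≠ 0 := by decide

lemma ShX0 : Sh (X 0) = X 0 * X 1 := by simp [Sh]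
lemma ShX1 : Sh (X 1) = X 1 := by simp [Sh]
lemma ThX0 : Th (X 0) = X 0 := by simp [Th]
lemma ThX1 : Th (X 1) = 1 := by simp [Th]

lemma pd_nat (i : Fin 2) (n : ℕ) : pderiv i ((n : R2)) = 0 := by
  rw [← map_natCast (C : ℝ →+* R2)]; exact pderiv_C

lemma pd_comm (i j : Fin 2) (p : R2) : pderiv i (pderiv j p) = pderiv j (pderiv i p) := by
  induction p using MvPolynomial.induction_on' with
  | add p q hp hq => simp [hp, hq]
  | monomial s a =>
    rcases eq_or_ne i j with rfl | hne
    · rfl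
    · simp only [pderiv_monomial]
      congr 1
      · rw [tsub_right_comm]
      · rw [Finsupp.tsub_apply, Finsupp.tsub_apply, Finsupp.single_apply,
          Finsupp.single_apply, if_neg hne, if_neg (Ne.symm hne)]
        simp only [Nat.sub_zero]
        ring

lemma chS0 (p : R2) : pderiv 0 (Sh p) = X 1 * Sh (pderiv 0 p) := by
  induction p using MvPolynomial.induction_on with
  | C a => simp [Sh]
  | add p q hp hq => simp [hp, hq]; ring
  | mul_X p n hp =>
    fin_cases n <;>
      simp [pderiv_mul, pderiv_X_self, pderiv_X_of_ne h01, pderiv_X_of_ne h10,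
        map_mul, hp, ShX0, ShX1] <;> ring

lemma chS1 (p : R2) : pderiv 1 (Sh p) = X 0 * Sh (pderiv 0 p) + Sh (pderiv 1 p) := by
  induction p using MvPolynomial.induction_on with
  | C a => simp [Sh]
  | add p q hp hq => simp [hp, hq]; ring
  | mul_X p n hp =>
    fin_cases n <;>
      simp [pderiv_mul, pderiv_X_self, pderiv_X_of_ne h01, pderiv_X_of_ne h10,
        map_mul, hp, chS0, ShX0, ShX1] <;> ring

lemma chT0 (p : R2) : pderiv 0 (Th p) = Th (pderiv 0 p) := by
  induction p using MvPolynomial.induction_on with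
  | C a => simp [Th]
  | add p q hp hq => simp [hp, hq]
  | mul_X p n hp =>
    fin_cases n <;>
      simp [pderiv_mul, pderiv_X_self, pderiv_X_of_ne h01, pderiv_X_of_ne h10,
        map_mul, hp, ThX0, ThX1]

lemma ThSh (p : R2) : Th (Sh p) = Th p := by
  have : Th.comp Sh = Th := by
    apply MvPolynomial.algHom_ext
    intro i; fin_cases i <;> simp [Th, Sh]
  exact congrFun (congrArg DFunLike.coe this) p

lemma evalTh (x : ℝ) (p : R2) :
    eval (fun i : Fin 2 => if i = 0 then x else 1) (Th p) =
    eval (fun i : Fin 2 => if i = 0 then x else 1) p := by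
  induction p using MvPolynomial.induction_on with
  | C a => simp [Th]
  | add p q hp hq => simp [hp, hq]
  | mul_X p n hp => fin_cases n <;> simp [map_mul, hp, ThX0, ThX1]

lemma pd_ofNat (i : Fin 2) : pderiv i (2 : R2) = 0 := by
  rw [← map_ofNat (C : ℝ →+* R2) 2]; exact pderiv_C

lemma Sh_apply (p : R2) :
    aeval (fun i : Fin 2 => if i = 0 then X 0 * X 1 else X 1) p = Sh p := rfl

theorem key_lemma (F : ℕ → MvPolynomial (Fin 2) ℝ)
    (hF1 : F 1 = 1)
    (hFrec : ∀ d : ℕ, 2 ≤ d →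
      (1 - X 1) * F d =
        (1 - X 0 * X 1 ^ d) * F (d - 1) -
          X 1 * (1 - X 0) *
            (aeval (fun i : Fin 2 => if i = 0 then X 0 * X 1 else X 1) (F (d - 1))))
    (d : ℕ) (hd : 1 ≤ d) :
    2 * Th (pderiv 1 (F d)) = (d : R2) * X 0 * Th (pderiv 0 (F d)) := by
  induction d, hd using Nat.le_induction with
  | base => simp [hF1]
  | succ n hn IH =>
    have E := hFrec (n+1) (by omega)
    simp only [Nat.add_sub_cancel, Sh_apply] at E
    set p := F n with hp
    set q := F (n+1) with hq
    -- first derivative in y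
    have E1 := congrArg (⇑(pderiv (1 : Fin 2))) E
    simp only [map_sub, map_add, map_neg, pderiv_mul, pderiv_one, pderiv_pow,
      pderiv_X_self, pderiv_X_of_ne h01, chS1, pd_nat, pd_ofNat, pderiv_C,
      Nat.add_sub_cancel, zero_mul, mul_zero, zero_add, add_zero, zero_sub, sub_zero,
      mul_one, one_mul, neg_neg, neg_mul, mul_neg] at E1
    have E2 := congrArg (⇑(pderiv (1 : Fin 2))) E1
    simp only [map_sub, map_add, map_neg, pderiv_mul, pderiv_one, pderiv_pow,
      pderiv_X_self, pderiv_X_of_ne h01, chS1, pd_nat, pd_ofNat, pderiv_C,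
      Nat.add_sub_cancel, zero_mul, mul_zero, zero_add, add_zero, zero_sub, sub_zero,
      mul_one, one_mul, neg_neg, neg_mul, mul_neg] at E2
    simp only [show pderiv (1 : Fin 2) (pderiv (0 : Fin 2) p) = pderiv 0 (pderiv 1 p)
      from pd_comm _ _ _] at E2
    -- set y = 1
    have T1 := congrArg (⇑Th) E1
    have T2 := congrArg (⇑Th) E2
    simp only [map_sub, map_add, map_neg, map_mul, map_pow, map_one, map_natCast,
      map_ofNat, ThX0, ThX1, ThSh, one_pow, mul_one, one_mul, sub_self, zero_mul,
      mul_zero, neg_neg, neg_mul, mul_neg] at T1 T2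
    have H1 : Th q = ((n:R2)+1) * X 0 * Th p + (1 - X 0) * Th p
        + X 0 * (1 - X 0) * Th (pderiv 0 p) := by
      push_cast at T1 ⊢
      linear_combination -T1
    have H2 : 2 * Th (pderiv 1 q) = (n:R2)*((n:R2)+1) * X 0 * Th p
        + 2*((n:R2)+1) * X 0 * Th (pderiv 1 p)
        + (1 - X 0) * (2 * Th (pderiv 1 p) + 2 * X 0 * Th (pderiv 0 p)
            + X 0^2 * Th (pderiv 0 (pderiv 0 p)) + 2 * X 0 * Th (pderiv 0 (pderiv 1 p))) := by
      push_cast at T2 ⊢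
      linear_combination -T2
    have HB : 2 * Th (pderiv 1 p) = (n:R2) * X 0 * Th (pderiv 0 p) := by
      push_cast at IH ⊢; linear_combination IH
    have HQ := congrArg (⇑(pderiv (0 : Fin 2))) HB
    simp only [map_sub, map_add, map_neg, pderiv_mul, chT0, pd_nat, pd_ofNat,
      pderiv_X_self, pderiv_one, pderiv_C, zero_mul, mul_zero, zero_add, add_zero,
      mul_one, one_mul, neg_neg, neg_mul, mul_neg, sub_zero, zero_sub] at HQ
    have HQ' : 2 * Th (pderiv 0 (pderiv 1 p)) =
        (n:R2) * Th (pderiv 0 p) + (n:R2) * X 0 * Th (pderiv 0 (pderiv 0 p)) := by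
      push_cast at HQ ⊢; linear_combination HQ
    have HC := congrArg (⇑(pderiv (0 : Fin 2))) H1
    simp only [map_sub, map_add, map_neg, pderiv_mul, chT0, pd_nat, pd_ofNat,
      pderiv_X_self, pderiv_one, pderiv_C, zero_mul, mul_zero, zero_add, add_zero,
      mul_one, one_mul, neg_neg, neg_mul, mul_neg, sub_zero, zero_sub] at HC
    have HC' : Th (pderiv 0 q) = (n:R2) * Th p
        + (((n:R2)+1) * X 0 + 2 - 3 * X 0) * Th (pderiv 0 p)
        + X 0 * (1 - X 0) * Th (pderiv 0 (pderiv 0 p)) := by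
      push_cast at HC ⊢; linear_combination HC
    push_cast
    linear_combination H2 - ((n:R2)+1) * X 0 * HC'
      + (((n:R2)+1) * X 0 + (1 - X 0)) * HB + (1 - X 0) * X 0 * HQ'

end

/-- The deformed Eulerian polynomials satisfy `∂F_d/∂y (x,1) = (dx/2) ∂F_d/∂x (x,1)`. -/
theorem deformed_pde (F : ℕ → MvPolynomial (Fin 2) ℝ)
    (hF1 : F 1 = 1)
    (hFrec : ∀ d : ℕ, 2 ≤ d →
      (1 - X 1) * F d =
        (1 - X 0 * X 1 ^ d) * F (d - 1) -
          X 1 * (1 - X 0) *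
            (aeval (fun i : Fin 2 => if i = 0 then X 0 * X 1 else X 1) (F (d - 1))))
    (d : ℕ) (hd : 1 ≤ d) (x : ℝ) :
    eval (fun i : Fin 2 => if i = 0 then x else 1) (pderiv (1 : Fin 2) (F d)) =
      ((d : ℝ) * x / 2) *
        eval (fun i : Fin 2 => if i = 0 then x else 1) (pderiv (0 : Fin 2) (F d)) := by
  have k := key_lemma F hF1 hFrec d hd
  have e := congrArg (eval (fun i : Fin 2 => if i = 0 then x else 1)) k
  simp only [map_mul, map_ofNat, map_natCast, evalTh, eval_X, if_pos rfl] at e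
  norm_num at e
  linarith
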